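/- For every n ≥ 2 and every k with 1 ≤ k ≤ L_{2n−2} − 1: if d is the base-phi expansion of L_{2n−1} + k and e is the base-phi expansion of L_{2n+1} + L_{2n−1} + k, then e(i) = d(i) for all i with −2n+2 ≤ i ≤ 2n−3, e(2n+1) = 1, e(2n) = 0, e(2n−1) = 1, e(2n−2) = 0, e(−2n+1) = e(−2n) = e(−2n−1) = 0, e(−2n−2) = 1, and e(i) = 0 for i > 2n+1 and for i < −2n−2. (This is the recursion β(L_{2n+1}+L_{2n−1}+k) = 10β(L_{2n−1}+k)(01)^{-1}0001 on the interval K_n.) -/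

import Mathlib

/-- The golden mean φ = (1+√5)/2. -/
noncomputable def phi : ℝ := (1 + Real.sqrt 5) / 2

noncomputable def psi : ℝ := (1 - Real.sqrt 5) / 2

lemma sqrt5_sq : Real.sqrt 5 ^ 2 = 5 := Real.sq_sqrt (by norm_num)
lemma sqrt5_gt : 2 < Real.sqrt 5 := by
  nlinarith [Real.sq_sqrt (show (0:ℝ) ≤ 5 by norm_num), Real.sqrt_nonneg 5]
lemma one_lt_phi : 1 < phi := by unfold phi; nlinarith [sqrt5_gt]
lemma phi_pos : 0 < phi := lt_trans one_pos one_lt_phi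
lemma phi_ne : phi ≠ 0 := ne_of_gt (by nlinarith [one_lt_phi])
lemma phi_sq : phi ^ 2 = phi + 1 := by unfold phi; linear_combination (1/4) * sqrt5_sq
lemma psi_sq : psi ^ 2 = psi + 1 := by unfold psi; linear_combination (1/4) * sqrt5_sq
lemma psi_neg : psi < 0 := by unfold psi; nlinarith [sqrt5_gt]
lemma psi_ne : psi ≠ 0 := ne_of_lt psi_neg
lemma phi_mul_psi : phi * psi = -1 := by unfold phi psi; linear_combination (-1/4) * sqrt5_sq
lemma phi_inv : phi⁻¹ = (Real.sqrt 5 - 1) / 2 := by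
  refine inv_eq_of_mul_eq_one_right ?_
  unfold phi; linear_combination (1/4) * sqrt5_sq
lemma psi_inv : psi⁻¹ = -(1 + Real.sqrt 5) / 2 := by
  refine inv_eq_of_mul_eq_one_right ?_
  unfold psi; linear_combination (1/4) * sqrt5_sq
lemma psi_eq : psi = -phi⁻¹ := by
  rw [phi_inv]; unfold psi; ring

lemma phi_zpow_pos (i : ℤ) : 0 < phi ^ i := zpow_pos phi_pos i

lemma phi_zpow_add_two (a : ℤ) : phi ^ (a + 2) = phi ^ (a + 1) + phi ^ a := by
  rw [show a + 2 = a + 1 + 1 from by ring, zpow_add_one₀ phi_ne (a+1), zpow_add_one₀ phi_ne a]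
  linear_combination phi ^ a * phi_sq

/-- Key bound: a finite set of exponents with no two consecutive, all ≤ M, sums to < φ^(M+1). -/
lemma sum_phi_zpow_lt : ∀ (S : Finset ℤ), (∀ i ∈ S, i + 1 ∉ S) → ∀ M : ℤ, (∀ i ∈ S, i ≤ M) →
    ∑ i ∈ S, phi ^ i < phi ^ (M + 1) := by
  intro S
  induction S using Finset.strongInduction with
  | _ S ih =>
    intro hcons M hM
    rcases S.eq_empty_or_nonempty with rfl | hne
    · simpa using phi_zpow_pos (M + 1)
    · set t := S.max' hne with htdef
      have htS : t ∈ S := S.max'_mem hne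
      have htM : t ≤ M := hM t htS
      have hsub : S.erase t ⊂ S := Finset.erase_ssubset htS
      have hbound : ∀ i ∈ S.erase t, i ≤ t - 2 := by
        intro i hi
        have hiS := Finset.mem_of_mem_erase hi
        have hit : i ≠ t := Finset.ne_of_mem_erase hi
        have hle : i ≤ t := S.le_max' i hiS
        have : i ≠ t - 1 := by
          intro h
          exact hcons i hiS (by rw [h]; simpa using htS)
        omega
      have h1 : ∑ i ∈ S.erase t, phi ^ i < phi ^ (t - 1) := by
        have := ih (S.erase t) hsub (fun i hi => fun h => hcons i (Finset.mem_of_mem_erase hi)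
          (Finset.mem_of_mem_erase h)) (t - 2) hbound
        · simpa [show t - 2 + 1 = t - 1 from by ring] using this
      have h2 : ∑ i ∈ S, phi ^ i = phi ^ t + ∑ i ∈ S.erase t, phi ^ i :=
        (Finset.add_sum_erase S _ htS).symm
      have h3 : phi ^ t + phi ^ (t - 1) = phi ^ (t + 1) := by
        have := phi_zpow_add_two (t - 1)
        rw [show t - 1 + 2 = t + 1 from by ring, show t - 1 + 1 = t from by ring] at this
        linarith
      have h4 : phi ^ (t + 1) ≤ phi ^ (M + 1) :=
        zpow_le_zpow_right₀ one_lt_phi.le (by omega)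
      linarith

lemma pow_repr (i : ℤ) : ∃ a b : ℚ, phi ^ i = (a : ℝ) + (b : ℝ) * Real.sqrt 5 ∧
    psi ^ i = (a : ℝ) - (b : ℝ) * Real.sqrt 5 := by
  induction i using Int.induction_on with
  | zero => exact ⟨1, 0, by norm_num, by norm_num⟩
  | succ n ih =>
    obtain ⟨a, b, h1, h2⟩ := ih
    refine ⟨(a + 5 * b) / 2, (a + b) / 2, ?_, ?_⟩
    · rw [zpow_add_one₀ phi_ne, h1]
      unfold phi; push_cast
      linear_combination ((b : ℝ) / 2) * sqrt5_sq
    · rw [zpow_add_one₀ psi_ne, h2]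
      unfold psi; push_cast
      linear_combination ((b : ℝ) / 2) * sqrt5_sq
  | pred n ih =>
    obtain ⟨a, b, h1, h2⟩ := ih
    refine ⟨(5 * b - a) / 2, (a - b) / 2, ?_, ?_⟩
    · rw [zpow_sub_one₀ phi_ne, h1, phi_inv]; push_cast
      linear_combination ((b : ℝ) / 2) * sqrt5_sq
    · rw [zpow_sub_one₀ psi_ne, h2, psi_inv]; push_cast
      linear_combination ((b : ℝ) / 2) * sqrt5_sq

lemma conj_sum (S : Finset ℤ) (r : ℚ) (h : ∑ i ∈ S, phi ^ i = (r : ℝ)) :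
    ∑ i ∈ S, psi ^ i = (r : ℝ) := by
  choose a b h1 h2 using pow_repr
  have hA : ∑ i ∈ S, phi ^ i = ((∑ i ∈ S, a i : ℚ) : ℝ) + ((∑ i ∈ S, b i : ℚ) : ℝ) * Real.sqrt 5 := by
    rw [Finset.sum_congr rfl (fun i _ => h1 i)]
    push_cast
    rw [Finset.sum_add_distrib, ← Finset.sum_mul]
  have hB : ∑ i ∈ S, psi ^ i = ((∑ i ∈ S, a i : ℚ) : ℝ) - ((∑ i ∈ S, b i : ℚ) : ℝ) * Real.sqrt 5 := by
    rw [Finset.sum_congr rfl (fun i _ => h2 i)]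
    push_cast
    rw [Finset.sum_sub_distrib, ← Finset.sum_mul]
  have hirr : Irrational (Real.sqrt 5) := by
    have h5 : Nat.Prime 5 := by norm_num
    have := h5.irrational_sqrt
    rwa [Nat.cast_ofNat] at this
  by_cases hb : (∑ i ∈ S, b i) = 0
  · rw [h] at hA
    have ha : ((∑ i ∈ S, a i : ℚ) : ℝ) = (r : ℝ) := by rw [hb] at hA; push_cast at hA ⊢; linarith
    rw [hB, ha, hb]; push_cast; ring
  · exfalso
    apply hirr
    refine ⟨(r - ∑ i ∈ S, a i) / (∑ i ∈ S, b i), ?_⟩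
    rw [h] at hA
    have hbne : ((∑ i ∈ S, b i : ℚ) : ℝ) ≠ 0 := by exact_mod_cast hb
    rw [Rat.cast_div, Rat.cast_sub, div_eq_iff hbne, mul_comm]
    linarith

lemma psi_zpow_even {i : ℤ} (h : Even i) : psi ^ i = phi ^ (-i) := by
  rw [psi_eq, h.neg_zpow, inv_zpow', zpow_neg]
lemma psi_zpow_odd {i : ℤ} (h : Odd i) : psi ^ i = -phi ^ (-i) := by
  rw [psi_eq, h.neg_zpow, inv_zpow', zpow_neg]
lemma abs_psi_zpow (i : ℤ) : |psi ^ i| = phi ^ (-i) := by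
  rcases Int.even_or_odd i with h | h
  · rw [psi_zpow_even h]; exact abs_of_pos (zpow_pos phi_pos _)
  · rw [psi_zpow_odd h, abs_neg]; exact abs_of_pos (zpow_pos phi_pos _)

/-- Mirror of `sum_phi_zpow_lt`: exponents ≥ m, no two consecutive ⇒ `∑ φ^{-i} < φ^{-m+1}`. -/
lemma sum_phi_zpow_neg_lt (S : Finset ℤ) (hcons : ∀ i ∈ S, i - 1 ∉ S) (m : ℤ)
    (hm : ∀ i ∈ S, m ≤ i) : ∑ i ∈ S, phi ^ (-i) < phi ^ (-m + 1) := by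
  have himg : ∑ i ∈ S, phi ^ (-i) = ∑ j ∈ S.image (fun i => -i), phi ^ j := by
    rw [Finset.sum_image (by intro a _ b _ h; have h' : -a = -b := h; omega)]
  rw [himg]
  apply sum_phi_zpow_lt
  · intro j hj hj1
    simp only [Finset.mem_image] at hj hj1
    obtain ⟨a, ha, rfl⟩ := hj
    obtain ⟨b, hb, hb'⟩ := hj1
    have : b = a - 1 := by omega
    exact hcons a ha (this ▸ hb)
  · intro j hj
    simp only [Finset.mem_image] at hj
    obtain ⟨a, ha, rfl⟩ := hj
    have := hm a ha; omega

lemma key_structure (N : ℕ) (t : ℤ) (ht3 : 3 ≤ t) (htodd : Odd t)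
    (S : Finset ℤ) (hcons : ∀ i ∈ S, i + 1 ∉ S)
    (hsum : ∑ i ∈ S, phi ^ i = (N : ℝ))
    (hlow : phi ^ t < (N : ℝ)) (hhigh : (N : ℝ) < phi ^ (t + 1)) :
    t ∈ S ∧ (∀ i ∈ S, i ≤ t) ∧ (-t - 1) ∈ S ∧ (∀ i ∈ S, -t - 1 ≤ i) := by
  have hNpos : (0 : ℝ) < N := lt_trans (phi_zpow_pos t) hlow
  have hne : S.Nonempty := by
    rcases S.eq_empty_or_nonempty with rfl | h
    · simp at hsum; simp [← hsum] at hNpos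
    · exact h
  -- upper structure
  have hupper : ∀ i ∈ S, i ≤ t := by
    intro i hi
    have h1 : ∑ j ∈ S, phi ^ j < phi ^ (t + 1) := hsum ▸ hhigh
    by_contra hgt
    push_neg at hgt
    have h2 : phi ^ i ≤ ∑ j ∈ S, phi ^ j :=
      Finset.single_le_sum (fun j _ => (phi_zpow_pos j).le) hi
    have h3 : phi ^ (t + 1) ≤ phi ^ i := zpow_le_zpow_right₀ one_lt_phi.le (by omega)
    linarith
  have htS : t ∈ S := by
    by_contra ht
    have hM : ∀ i ∈ S, i ≤ t - 1 := by
      intro i hi; have := hupper i hi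
      rcases eq_or_lt_of_le this with rfl | h
      · exact absurd hi ht
      · omega
    have := sum_phi_zpow_lt S hcons (t - 1) hM
    rw [show t - 1 + 1 = t from by ring] at this
    linarith [hsum ▸ this]
  -- conjugate sum
  have hT : ∑ i ∈ S, psi ^ i = (N : ℝ) := by
    apply conj_sum S (N : ℚ)
    rw [hsum]; push_cast; ring
  have hcons' : ∀ i ∈ S, i - 1 ∉ S := fun i hi h => hcons (i - 1) h (by simpa using hi)
  -- lower bound: all elements ≥ -t-1
  have hlower : ∀ i ∈ S, -t - 1 ≤ i := by
    by_contra hc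
    push_neg at hc
    obtain ⟨i₀, hi₀S, hi₀⟩ := hc
    -- take the minimum element m of S; m ≤ i₀ < -t-1
    set m := S.min' hne with hmdef
    have hmS : m ∈ S := S.min'_mem hne
    have hmle : ∀ i ∈ S, m ≤ i := fun i hi => S.min'_le i hi
    have hm_small : m < -t - 1 := lt_of_le_of_lt (hmle i₀ hi₀S) hi₀
    -- the rest of the sum
    have herase_ge : ∀ i ∈ S.erase m, m + 2 ≤ i := by
      intro i hi
      have hiS := Finset.mem_of_mem_erase hi
      have hne1 : i ≠ m := Finset.ne_of_mem_erase hi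
      have hne2 : i ≠ m + 1 := fun h => hcons m hmS (h ▸ hiS)
      have := hmle i hiS; omega
    have hRbound : |∑ i ∈ S.erase m, psi ^ i| < phi ^ (-m - 1) := by
      calc |∑ i ∈ S.erase m, psi ^ i| ≤ ∑ i ∈ S.erase m, |psi ^ i| :=
            Finset.abs_sum_le_sum_abs _ _
        _ = ∑ i ∈ S.erase m, phi ^ (-i) := by
            exact Finset.sum_congr rfl fun i _ => abs_psi_zpow i
        _ < phi ^ (-(m + 2) + 1) := by
            apply sum_phi_zpow_neg_lt _ (fun i hi h => hcons' i (Finset.mem_of_mem_erase hi)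
              (Finset.mem_of_mem_erase h)) (m + 2) herase_ge
        _ = phi ^ (-m - 1) := by ring_nf
    have hsplit : ∑ i ∈ S, psi ^ i = psi ^ m + ∑ i ∈ S.erase m, psi ^ i :=
      (Finset.add_sum_erase S _ hmS).symm
    rcases Int.even_or_odd m with hev | hod
    · -- even m: m ≤ -t-3 since -t-1 is even and m < -t-1, so m ≤ -t-2; even excludes -t-2? 
      -- t odd ⇒ -t-1 even, -t-2 odd; m even < -t-1 ⇒ m ≤ -t-3
      have hm3 : m ≤ -t - 3 := by
        rcases hev with ⟨a, ha⟩; rcases htodd with ⟨b, hb⟩; omega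
      have h1 : psi ^ m = phi ^ (-m) := psi_zpow_even hev
      have h2 : (N : ℝ) ≥ phi ^ (-m) - phi ^ (-m - 1) := by
        rw [← hT, hsplit, h1]
        have := abs_le.mp hRbound.le
        linarith [this.1]
      have h3 : phi ^ (-m) - phi ^ (-m - 1) = phi ^ (-m - 2) := by
        have := phi_zpow_add_two (-m - 2)
        rw [show -m - 2 + 2 = -m from by ring, show -m - 2 + 1 = -m - 1 from by ring] at this
        linarith
      have h4 : phi ^ (t + 1) ≤ phi ^ (-m - 2) := zpow_le_zpow_right₀ one_lt_phi.le (by omega)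
      linarith
    · -- odd m: ψ^m = -φ^{-m}, so conjugate sum is negative
      have h1 : psi ^ m = -phi ^ (-m) := psi_zpow_odd hod
      have h2 : (N : ℝ) ≤ -phi ^ (-m) + phi ^ (-m - 1) := by
        rw [← hT, hsplit, h1]
        have := abs_le.mp hRbound.le
        linarith [this.2]
      have h3 : phi ^ (-m - 1) < phi ^ (-m) := zpow_lt_zpow_right₀ one_lt_phi (by omega)
      linarith
  -- bottom element: -t-1 ∈ S
  have hbot : (-t - 1) ∈ S := by
    by_contra hb
    -- then all elements are ≥ -t+1 or odd equal to -t; evens are ≥ -t+1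
    have hTle : (N : ℝ) ≤ ∑ i ∈ S.filter (fun i => Even i), psi ^ i := by
      rw [← hT, ← Finset.sum_filter_add_sum_filter_not S (fun i => Even i)]
      have : ∑ i ∈ S.filter (fun i => ¬ Even i), psi ^ i ≤ 0 := by
        apply Finset.sum_nonpos
        intro i hi
        rw [Finset.mem_filter] at hi
        rw [psi_zpow_odd (Int.not_even_iff_odd.mp hi.2)]
        linarith [phi_zpow_pos (-i)]
      linarith
    have hEbound : ∑ i ∈ S.filter (fun i => Even i), psi ^ i < phi ^ t := by
      have heq : ∑ i ∈ S.filter (fun i => Even i), psi ^ i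
          = ∑ i ∈ S.filter (fun i => Even i), phi ^ (-i) := by
        refine Finset.sum_congr rfl fun i hi => ?_
        rw [Finset.mem_filter] at hi
        exact psi_zpow_even hi.2
      rw [heq]
      have := sum_phi_zpow_neg_lt (S.filter (fun i => Even i))
        (by
          intro i hi h
          rw [Finset.mem_filter] at hi h
          rcases hi.2 with ⟨a, ha⟩
          rcases h.2 with ⟨b, hb⟩
          omega)
        (-t + 1)
        (by
          intro i hi
          rw [Finset.mem_filter] at hi
          have h1 := hlower i hi.1
          have h2 : i ≠ -t - 1 := fun h => hb (h ▸ hi.1)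
          rcases hi.2 with ⟨a, ha⟩; rcases htodd with ⟨c, hc⟩
          omega)
      rw [show -(-t + 1) + 1 = t from by ring] at this
      exact this
    linarith
  exact ⟨htS, hupper, hbot, hlower⟩

/-- Two finite digit-supports with no consecutive elements and equal φ-power sums coincide. -/
lemma support_unique (S T : Finset ℤ) (hS : ∀ i ∈ S, i + 1 ∉ S) (hT : ∀ i ∈ T, i + 1 ∉ T)
    (hsum : ∑ i ∈ S, phi ^ i = ∑ i ∈ T, phi ^ i) : S = T := by
  by_contra hne
  -- the symmetric difference is nonempty
  have hVne : ∃ j, (j ∈ S ∧ j ∉ T) ∨ (j ∈ T ∧ j ∉ S) := by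
    by_contra hc
    push_neg at hc
    apply hne
    apply Finset.ext
    intro i
    constructor
    · intro h; exact (hc i).1 h
    · intro h; exact (hc i).2 h
  set V : Finset ℤ := (S \ T) ∪ (T \ S) with hVdef
  have hVne' : V.Nonempty := by
    obtain ⟨j, hj⟩ := hVne
    refine ⟨j, ?_⟩
    rcases hj with ⟨h1, h2⟩ | ⟨h1, h2⟩
    · exact Finset.mem_union_left _ (Finset.mem_sdiff.mpr ⟨h1, h2⟩)
    · exact Finset.mem_union_right _ (Finset.mem_sdiff.mpr ⟨h1, h2⟩)
  set j := V.max' hVne' with hjdef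
  have hjV : j ∈ V := V.max'_mem hVne'
  have habove : ∀ i, j < i → (i ∈ S ↔ i ∈ T) := by
    intro i hi
    constructor
    · intro h
      by_contra h2
      have : i ∈ V := Finset.mem_union_left _ (Finset.mem_sdiff.mpr ⟨h, h2⟩)
      have := V.le_max' i this; omega
    · intro h
      by_contra h2
      have : i ∈ V := Finset.mem_union_right _ (Finset.mem_sdiff.mpr ⟨h, h2⟩)
      have := V.le_max' i this; omega
  -- helper contradiction
  have key : ∀ (A B : Finset ℤ), (∀ i ∈ B, i + 1 ∉ B) → j ∈ A → j ∉ B →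
      (∀ i, j < i → (i ∈ A ↔ i ∈ B)) → ∑ i ∈ A, phi ^ i ≠ ∑ i ∈ B, phi ^ i := by
    intro A B hBcons hjA hjB hab hEq
    have hsplitA : ∑ i ∈ A, phi ^ i
        = ∑ i ∈ A.filter (fun i => j < i), phi ^ i + ∑ i ∈ A.filter (fun i => ¬ j < i), phi ^ i :=
      (Finset.sum_filter_add_sum_filter_not A _ _).symm
    have hsplitB : ∑ i ∈ B, phi ^ i
        = ∑ i ∈ B.filter (fun i => j < i), phi ^ i + ∑ i ∈ B.filter (fun i => ¬ j < i), phi ^ i :=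
      (Finset.sum_filter_add_sum_filter_not B _ _).symm
    have hfeq : A.filter (fun i => j < i) = B.filter (fun i => j < i) := by
      apply Finset.ext
      intro i
      simp only [Finset.mem_filter]
      constructor
      · rintro ⟨h1, h2⟩; exact ⟨(hab i h2).mp h1, h2⟩
      · rintro ⟨h1, h2⟩; exact ⟨(hab i h2).mpr h1, h2⟩
    have hA' : phi ^ j ≤ ∑ i ∈ A.filter (fun i => ¬ j < i), phi ^ i := by
      apply Finset.single_le_sum (fun i _ => (phi_zpow_pos i).le)
      simp [hjA]
    have hB' : ∑ i ∈ B.filter (fun i => ¬ j < i), phi ^ i < phi ^ j := by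
      have := sum_phi_zpow_lt (B.filter (fun i => ¬ j < i))
        (by
          intro i hi h
          rw [Finset.mem_filter] at hi h
          exact hBcons i hi.1 h.1)
        (j - 1)
        (by
          intro i hi
          rw [Finset.mem_filter] at hi
          have h1 : ¬ j < i := hi.2
          have h2 : i ≠ j := fun h => hjB (h ▸ hi.1)
          omega)
      rw [show j - 1 + 1 = j from by ring] at this
      exact this
    rw [hsplitA, hsplitB, hfeq] at hEq
    linarith
  rw [hVdef] at hjV
  rcases Finset.mem_union.mp hjV with h | h
  · have h' := Finset.mem_sdiff.mp h
    exact key S T hT h'.1 h'.2 habove hsum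
  · have h' := Finset.mem_sdiff.mp h
    exact key T S hS h'.1 h'.2 (fun i hi => (habove i hi).symm) hsum.symm


/-- `d : ℤ → ℕ` is a base-phi expansion of `N`: finitely supported, digits at most 1,
no two consecutive digits equal 1, and `∑ d i * φ^i = N`. -/
def IsBasePhi (N : ℕ) (d : ℤ → ℕ) : Prop :=
  {i : ℤ | d i ≠ 0}.Finite ∧ (∀ i, d i ≤ 1) ∧ (∀ i, d i * d (i + 1) = 0) ∧
    ∑' i : ℤ, (d i : ℝ) * phi ^ i = (N : ℝ)

/-- The Lucas numbers: L 0 = 2, L 1 = 1, L (n+2) = L (n+1) + L n. -/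
def Lucas : ℕ → ℕ
  | 0 => 2
  | 1 => 1
  | n + 2 => Lucas (n + 1) + Lucas n

lemma lucas_real : ∀ m : ℕ, (Lucas m : ℝ) = phi ^ m + psi ^ m
  | 0 => by norm_num [Lucas]
  | 1 => by
    rw [show Lucas 1 = 1 from rfl]; push_cast; rw [pow_one, pow_one]; unfold phi psi; ring
  | m + 2 => by
    rw [Lucas]
    push_cast
    rw [lucas_real (m + 1), lucas_real m]
    have h1 : phi ^ (m + 2) = phi ^ (m + 1) + phi ^ m := by
      calc phi ^ (m + 2) = phi ^ m * phi ^ 2 := by ring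
        _ = phi ^ m * phi + phi ^ m := by rw [phi_sq]; ring
        _ = phi ^ (m + 1) + phi ^ m := by ring
    have h2 : psi ^ (m + 2) = psi ^ (m + 1) + psi ^ m := by
      calc psi ^ (m + 2) = psi ^ m * psi ^ 2 := by ring
        _ = psi ^ m * psi + psi ^ m := by rw [psi_sq]; ring
        _ = psi ^ (m + 1) + psi ^ m := by ring
    rw [h1, h2]; ring

lemma lucas_pos : ∀ m : ℕ, 0 < Lucas m
  | 0 => by norm_num [Lucas]
  | 1 => by norm_num [Lucas]
  | m + 2 => by rw [Lucas]; have := lucas_pos m; omega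

lemma lucas_real_odd (m : ℕ) (h : Odd m) : (Lucas m : ℝ) = phi ^ (m : ℤ) - phi ^ (-(m : ℤ)) := by
  rw [lucas_real, ← zpow_natCast phi m, ← zpow_natCast psi m, psi_eq]
  rw [(Int.odd_coe_nat m |>.mpr h).neg_zpow, inv_zpow', zpow_natCast, ← zpow_natCast phi m]
  ring

lemma lucas_real_even (m : ℕ) (h : Even m) : (Lucas m : ℝ) = phi ^ (m : ℤ) + phi ^ (-(m : ℤ)) := by
  rw [lucas_real, ← zpow_natCast phi m, ← zpow_natCast psi m, psi_eq]
  rw [(Int.even_coe_nat m |>.mpr h).neg_zpow, inv_zpow', zpow_natCast, ← zpow_natCast phi m]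

/-- Extract a finite-support sum from a base-phi expansion. -/
lemma basePhi_finsum (N : ℕ) (d : ℤ → ℕ) (h : IsBasePhi N d) :
    ∑ i ∈ h.1.toFinset, phi ^ i = (N : ℝ) ∧ (∀ i ∈ h.1.toFinset, i + 1 ∉ h.1.toFinset) ∧
      (∀ i, i ∈ h.1.toFinset ↔ d i ≠ 0) ∧ (∀ i ∈ h.1.toFinset, d i = 1) := by
  have hmem : ∀ i, i ∈ h.1.toFinset ↔ d i ≠ 0 := fun i => h.1.mem_toFinset
  have hone : ∀ i ∈ h.1.toFinset, d i = 1 := by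
    intro i hi
    have h1 := (hmem i).mp hi
    have h2 := h.2.1 i
    omega
  refine ⟨?_, ?_, hmem, hone⟩
  · have hts : ∑' i : ℤ, (d i : ℝ) * phi ^ i = ∑ i ∈ h.1.toFinset, (d i : ℝ) * phi ^ i := by
      apply tsum_eq_sum
      intro i hi
      have : d i = 0 := by by_contra h2; exact hi ((hmem i).mpr h2)
      rw [this]; simp
    have h2 : ∑ i ∈ h.1.toFinset, phi ^ i = ∑ i ∈ h.1.toFinset, (d i : ℝ) * phi ^ i := by
      apply Finset.sum_congr rfl
      intro i hi
      rw [hone i hi]; simp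
    rw [h2, ← hts, h.2.2.2]
  · intro i hi hi1
    have := h.2.2.1 i
    rw [hone i hi, hone (i+1) hi1] at this
    omega

/-- Recursion on `K_n`: `β(L_{2n+1}+L_{2n-1}+k) = 10 β(L_{2n-1}+k) (01)^{-1} 0001`. -/
theorem recursion_Kn (n : ℕ) (hn : 2 ≤ n) (k : ℕ) (hk1 : 1 ≤ k)
    (hk2 : k ≤ Lucas (2 * n - 2) - 1) (d e : ℤ → ℕ)
    (hd : IsBasePhi (Lucas (2 * n - 1) + k) d)
    (he : IsBasePhi (Lucas (2 * n + 1) + Lucas (2 * n - 1) + k) e) :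
    (∀ i : ℤ, -(2 * n : ℤ) + 2 ≤ i → i ≤ 2 * (n : ℤ) - 3 → e i = d i) ∧
    e (2 * (n : ℤ) + 1) = 1 ∧ e (2 * (n : ℤ)) = 0 ∧ e (2 * (n : ℤ) - 1) = 1 ∧
    e (2 * (n : ℤ) - 2) = 0 ∧
    e (-(2 * n : ℤ) + 1) = 0 ∧ e (-(2 * n : ℤ)) = 0 ∧ e (-(2 * n : ℤ) - 1) = 0 ∧
    e (-(2 * n : ℤ) - 2) = 1 ∧
    (∀ i : ℤ, 2 * (n : ℤ) + 1 < i → e i = 0) ∧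
    (∀ i : ℤ, i < -(2 * n : ℤ) - 2 → e i = 0) := by
  set t : ℤ := 2 * (n : ℤ) - 1 with htdef
  have ht3 : 3 ≤ t := by omega
  have htodd : Odd t := ⟨(n : ℤ) - 1, by omega⟩
  set N : ℕ := Lucas (2 * n - 1) + k with hNdef
  set M : ℕ := Lucas (2 * n + 1) + Lucas (2 * n - 1) + k with hMdef
  obtain ⟨hdsum, hdcons, hdmem, hdone⟩ := basePhi_finsum N d hd
  obtain ⟨hesum, hecons, hemem, heone⟩ := basePhi_finsum M e he
  set Sd := hd.1.toFinset
  set Se := he.1.toFinset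
  -- index casts
  have hc1 : ((2 * n - 1 : ℕ) : ℤ) = t := by omega
  have hc2 : ((2 * n : ℕ) : ℤ) = t + 1 := by omega
  have hc3 : ((2 * n + 1 : ℕ) : ℤ) = t + 2 := by omega
  -- Lucas facts
  have hLodd1 : (Lucas (2 * n - 1) : ℝ) = phi ^ t - phi ^ (-t) := by
    have := lucas_real_odd (2 * n - 1) ⟨n - 1, by omega⟩
    rwa [hc1] at this
  have hLodd2 : (Lucas (2 * n + 1) : ℝ) = phi ^ (t + 2) - phi ^ (-(t + 2)) := by
    have := lucas_real_odd (2 * n + 1) ⟨n, by omega⟩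
    rwa [hc3] at this
  have hLsum : Lucas (2 * n) = Lucas (2 * n - 1) + Lucas (2 * n - 2) := by
    have e1 : 2 * n - 2 + 2 = 2 * n := by omega
    have e2 : 2 * n - 2 + 1 = 2 * n - 1 := by omega
    have h : Lucas (2 * n - 2 + 2) = Lucas (2 * n - 2 + 1) + Lucas (2 * n - 2) := rfl
    rw [e1, e2] at h
    exact h
  have hLeven : (Lucas (2 * n) : ℝ) = phi ^ (t + 1) + phi ^ (-(t + 1)) := by
    have := lucas_real_even (2 * n) ⟨n, by omega⟩
    rwa [hc2] at this
  have hzpowlt : ∀ a b : ℤ, a < b → phi ^ a < phi ^ b := fun a b h =>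
    zpow_lt_zpow_right₀ one_lt_phi h
  have hphi0 : phi ^ (0 : ℤ) = 1 := zpow_zero phi
  -- bounds on N
  have hlow : phi ^ t < (N : ℝ) := by
    have h1 : (Lucas (2 * n - 1) : ℝ) + 1 ≤ (N : ℝ) := by
      exact_mod_cast (show Lucas (2 * n - 1) + 1 ≤ N by omega)
    have h2 : phi ^ (-t) < 1 := by
      have := hzpowlt (-t) 0 (by omega); rwa [hphi0] at this
    rw [hLodd1] at h1; linarith
  have hhigh : (N : ℝ) < phi ^ (t + 1) := by
    have h0 := lucas_pos (2 * n - 2)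
    have h1 : N ≤ Lucas (2 * n) - 1 := by omega
    have h2 : (N : ℝ) + 1 ≤ (Lucas (2 * n) : ℝ) := by
      have := lucas_pos (2 * n)
      exact_mod_cast (show N + 1 ≤ Lucas (2 * n) by omega)
    have h3 : phi ^ (-(t + 1)) < 1 := by
      have := hzpowlt (-(t + 1)) 0 (by omega); rwa [hphi0] at this
    rw [hLeven] at h2; linarith
  obtain ⟨htS, hupper, hbotS, hlower⟩ := key_structure N t ht3 htodd Sd hdcons hdsum hlow hhigh
  -- decompose Sd
  set W : Finset ℤ := Sd.filter (fun i => -t + 1 ≤ i ∧ i ≤ t - 2) with hWdef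
  have hWmem : ∀ i, i ∈ W ↔ (i ∈ Sd ∧ -t + 1 ≤ i ∧ i ≤ t - 2) := by
    intro i; simp [hWdef]
  have ht1notin : (t - 1) ∉ Sd := fun h => hdcons (t - 1) h (by rw [show t - 1 + 1 = t from by ring]; exact htS)
  have hmtnotin : (-t) ∉ Sd := fun h => hdcons (-t - 1) hbotS (by rw [show -t - 1 + 1 = -t from by ring]; exact h)
  have hSd_eq : Sd = insert t (insert (-t - 1) W) := by
    apply Finset.ext
    intro i
    simp only [Finset.mem_insert]
    rw [hWmem]
    constructor
    · intro hi
      have h1 := hupper i hi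
      have h2 := hlower i hi
      have h3 : i ≠ t - 1 := fun h => ht1notin (h ▸ hi)
      have h4 : i ≠ -t := fun h => hmtnotin (h ▸ hi)
      by_cases h5 : i = t
      · left; exact h5
      · by_cases h6 : i = -t - 1
        · right; left; exact h6
        · right; right; exact ⟨hi, by omega, by omega⟩
    · rintro (rfl | rfl | ⟨h, _⟩)
      · exact htS
      · exact hbotS
      · exact h
  have hW_sum : phi ^ t + phi ^ (-t - 1) + ∑ i ∈ W, phi ^ i = (N : ℝ) := by
    rw [hSd_eq] at hdsum
    rw [Finset.sum_insert, Finset.sum_insert] at hdsum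
    · linarith
    · rw [hWmem]; push_neg; intro _; omega
    · simp only [Finset.mem_insert]; rw [hWmem]; push_neg
      refine ⟨by omega, fun _ => by omega⟩
  -- the support of e, constructed
  set S' : Finset ℤ := insert (t + 2) (insert t (insert (-t - 3) W)) with hS'def
  have hS'mem : ∀ i, i ∈ S' ↔ (i = t + 2 ∨ i = t ∨ i = -t - 3 ∨
      (i ∈ Sd ∧ -t + 1 ≤ i ∧ i ≤ t - 2)) := by
    intro i
    simp only [hS'def, Finset.mem_insert]
    rw [hWmem]
  have hconsS' : ∀ i ∈ S', i + 1 ∉ S' := by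
    intro i hi hcontra
    rw [hS'mem] at hi hcontra
    rcases hcontra with h | h | h | ⟨hmem, hb1, hb2⟩
    · rcases hi with h' | h' | h' | ⟨_, hb1, hb2⟩ <;> omega
    · rcases hi with h' | h' | h' | ⟨_, hb1, hb2⟩ <;> omega
    · rcases hi with h' | h' | h' | ⟨_, hb1, hb2⟩ <;> omega
    · rcases hi with h' | h' | h' | ⟨hmem', hb1', hb2'⟩
      · omega
      · omega
      · omega
      · exact hdcons i hmem' hmem
  have hS'_sum : ∑ i ∈ S', phi ^ i = (M : ℝ) := by
    have hnm1 : (t + 2) ∉ insert t (insert (-t - 3) W) := by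
      simp only [Finset.mem_insert]; rw [hWmem]; push_neg
      refine ⟨by omega, by omega, fun _ => by omega⟩
    have hnm2 : t ∉ insert (-t - 3) W := by
      simp only [Finset.mem_insert]; rw [hWmem]; push_neg
      refine ⟨by omega, fun _ => by omega⟩
    have hnm3 : (-t - 3) ∉ W := by rw [hWmem]; push_neg; intro _; omega
    rw [hS'def, Finset.sum_insert hnm1, Finset.sum_insert hnm2, Finset.sum_insert hnm3]
    have hid : phi ^ (-t - 1) = phi ^ (-t - 2) + phi ^ (-t - 3) := by
      have := phi_zpow_add_two (-t - 3)
      rw [show -t - 3 + 2 = -t - 1 from by ring, show -t - 3 + 1 = -t - 2 from by ring] at this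
      linarith
    have hM : (M : ℝ) = (Lucas (2 * n + 1) : ℝ) + (N : ℝ) := by
      rw [hMdef, hNdef]; push_cast; ring
    rw [hM, hLodd2]
    have : (-(t + 2)) = -t - 2 := by ring
    rw [this]
    linarith
  -- uniqueness: Se = S'
  have hSe_eq : Se = S' := support_unique Se S' hecons hconsS' (by rw [hesum, hS'_sum])
  have hval1 : ∀ i, i ∈ S' → e i = 1 := by
    intro i hi
    rw [← hSe_eq] at hi
    exact heone i hi
  have hval0 : ∀ i, i ∉ S' → e i = 0 := by
    intro i hi
    rw [← hSe_eq] at hi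
    by_contra h
    exact hi ((hemem i).mpr h)
  have hnotmem : ∀ i, i ≠ t + 2 → i ≠ t → i ≠ -t - 3 → (¬(-t + 1 ≤ i ∧ i ≤ t - 2)) →
      i ∉ S' := by
    intro i h1 h2 h3 h4 h
    rw [hS'mem] at h
    rcases h with h | h | h | ⟨_, hb1, hb2⟩
    · exact h1 h
    · exact h2 h
    · exact h3 h
    · exact h4 ⟨hb1, hb2⟩
  refine ⟨?_, ?_, ?_, ?_, ?_, ?_, ?_, ?_, ?_, ?_, ?_⟩
  · -- window
    intro i h1 h2
    have hb1 : -t + 1 ≤ i := by omega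
    have hb2 : i ≤ t - 2 := by omega
    by_cases hdi : d i = 0
    · have hiSd : i ∉ Sd := fun h => (hdmem i).mp h hdi
      have : i ∉ S' := by
        intro h
        rw [hS'mem] at h
        rcases h with h | h | h | ⟨hm, _⟩
        · omega
        · omega
        · omega
        · exact hiSd hm
      rw [hval0 i this, hdi]
    · have hiSd : i ∈ Sd := (hdmem i).mpr hdi
      have : i ∈ S' := by rw [hS'mem]; exact Or.inr (Or.inr (Or.inr ⟨hiSd, hb1, hb2⟩))
      rw [hval1 i this, hdone i hiSd]
  · rw [show 2 * (n : ℤ) + 1 = t + 2 from by omega]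
    exact hval1 _ (by rw [hS'mem]; exact Or.inl rfl)
  · rw [show 2 * (n : ℤ) = t + 1 from by omega]
    exact hval0 _ (hnotmem _ (by omega) (by omega) (by omega) (by omega))
  · exact hval1 t (by rw [hS'mem]; exact Or.inr (Or.inl rfl))
  · rw [show 2 * (n : ℤ) - 2 = t - 1 from by omega]
    exact hval0 _ (hnotmem _ (by omega) (by omega) (by omega) (by omega))
  · rw [show -(2 * n : ℤ) + 1 = -t from by omega]
    exact hval0 _ (hnotmem _ (by omega) (by omega) (by omega) (by omega))
  · rw [show -(2 * n : ℤ) = -t - 1 from by omega]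
    exact hval0 _ (hnotmem _ (by omega) (by omega) (by omega) (by omega))
  · rw [show -(2 * n : ℤ) - 1 = -t - 2 from by omega]
    exact hval0 _ (hnotmem _ (by omega) (by omega) (by omega) (by omega))
  · rw [show -(2 * n : ℤ) - 2 = -t - 3 from by omega]
    exact hval1 _ (by rw [hS'mem]; exact Or.inr (Or.inr (Or.inl rfl)))
  · intro i hi
    exact hval0 _ (hnotmem _ (by omega) (by omega) (by omega) (by omega))
  · intro i hi
    exact hval0 _ (hnotmem _ (by omega) (by omega) (by omega) (by omega))
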